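/- Let 0 < q < 1, μ₂ > μ₁ > 0 reals and j > i ≥ 0 integers. Then det( 1/(q^{μ₁};q)ᵢ, 1/(q^{μ₂};q)ᵢ ; 1/(q^{μ₁};q)ⱼ, 1/(q^{μ₂};q)ⱼ ) is strictly negative; i.e. the kernel 1/(q^μ;q)ₙ is strictly reverse-rule of order 2. -/

import Mathlib

/-- The q-Pochhammer symbol `(a; q)_n = ∏_{k=0}^{n-1} (1 - a q^k)`. -/
def qPoch (a q : ℝ) (n : ℕ) : ℝ := ∏ k ∈ Finset.range n, (1 - a * q ^ k)

lemma qPoch_factor_pos {a q : ℝ} (hq0 : 0 < q) (hq1 : q < 1) (ha0 : 0 < a) (ha1 : a < 1)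
    (k : ℕ) : 0 < 1 - a * q ^ k := by
  have h1 : a * q ^ k ≤ a * 1 := by
    apply mul_le_mul_of_nonneg_left (pow_le_one₀ hq0.le hq1.le) ha0.le
  linarith

lemma qPoch_pos {a q : ℝ} (hq0 : 0 < q) (hq1 : q < 1) (ha0 : 0 < a) (ha1 : a < 1)
    (n : ℕ) : 0 < qPoch a q n :=
  Finset.prod_pos fun k _ => qPoch_factor_pos hq0 hq1 ha0 ha1 k

theorem inv_qPoch_kernel_det2_neg (q : ℝ) (hq0 : 0 < q) (hq1 : q < 1)
    (μ₁ μ₂ : ℝ) (hμ0 : 0 < μ₁) (hμ : μ₁ < μ₂) (i j : ℕ) (hij : i < j) :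
    (qPoch (q ^ μ₁) q i)⁻¹ * (qPoch (q ^ μ₂) q j)⁻¹
      - (qPoch (q ^ μ₂) q i)⁻¹ * (qPoch (q ^ μ₁) q j)⁻¹ < 0 := by
  set a₁ := q ^ μ₁ with ha₁def
  set a₂ := q ^ μ₂ with ha₂def
  have ha₁0 : 0 < a₁ := Real.rpow_pos_of_pos hq0 _
  have ha₂0 : 0 < a₂ := Real.rpow_pos_of_pos hq0 _
  have ha₁1 : a₁ < 1 := Real.rpow_lt_one hq0.le hq1 hμ0
  have ha₂1 : a₂ < 1 := Real.rpow_lt_one hq0.le hq1 (hμ0.trans hμ)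
  have ha : a₂ < a₁ := Real.rpow_lt_rpow_of_exponent_gt hq0 hq1 hμ
  have hP1i := qPoch_pos hq0 hq1 ha₁0 ha₁1 i
  have hP2i := qPoch_pos hq0 hq1 ha₂0 ha₂1 i
  have hP1j := qPoch_pos hq0 hq1 ha₁0 ha₁1 j
  have hP2j := qPoch_pos hq0 hq1 ha₂0 ha₂1 j
  have hsplit : ∀ a : ℝ, qPoch a q i * ∏ k ∈ Finset.Ico i j, (1 - a * q ^ k) = qPoch a q j := by
    intro a
    exact Finset.prod_range_mul_prod_Ico _ hij.le
  have hQ : (∏ k ∈ Finset.Ico i j, (1 - a₁ * q ^ k)) <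
      ∏ k ∈ Finset.Ico i j, (1 - a₂ * q ^ k) := by
    apply Finset.prod_lt_prod_of_nonempty
    · intro k _; exact qPoch_factor_pos hq0 hq1 ha₁0 ha₁1 k
    · intro k _
      have : a₂ * q ^ k < a₁ * q ^ k :=
        mul_lt_mul_of_pos_right ha (pow_pos hq0 k)
      linarith
    · exact Finset.nonempty_Ico.mpr hij
  have key : qPoch a₂ q i * qPoch a₁ q j < qPoch a₁ q i * qPoch a₂ q j := by
    rw [← hsplit a₁, ← hsplit a₂]
    calc qPoch a₂ q i * (qPoch a₁ q i * ∏ k ∈ Finset.Ico i j, (1 - a₁ * q ^ k))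
        = (qPoch a₁ q i * qPoch a₂ q i) * ∏ k ∈ Finset.Ico i j, (1 - a₁ * q ^ k) := by ring
      _ < (qPoch a₁ q i * qPoch a₂ q i) * ∏ k ∈ Finset.Ico i j, (1 - a₂ * q ^ k) :=
          mul_lt_mul_of_pos_left hQ (mul_pos hP1i hP2i)
      _ = qPoch a₁ q i * (qPoch a₂ q i * ∏ k ∈ Finset.Ico i j, (1 - a₂ * q ^ k)) := by ring
  have h1 : (qPoch a₁ q i)⁻¹ * (qPoch a₂ q j)⁻¹ = (qPoch a₁ q i * qPoch a₂ q j)⁻¹ := by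
    rw [mul_inv]
  have h2 : (qPoch a₂ q i)⁻¹ * (qPoch a₁ q j)⁻¹ = (qPoch a₂ q i * qPoch a₁ q j)⁻¹ := by
    rw [mul_inv]
  rw [h1, h2, sub_neg]
  exact inv_strictAnti₀ (mul_pos hP2i hP1j) key
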